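/- Let H > 0, b > 0, and m > 0 be real numbers and let F : [0, b] → ℝ be twice continuously differentiable with F''(x) ≤ H and F(x) ≥ m for all x ∈ [0, b]. If 0 < F'(b) ≤ 2·H·b, then F'(b)/F(b) ≤ √(H/m). -/

import Mathlib

/-- If `F` is twice continuously differentiable on `[0,b]` with `F'' ≤ H`
(`H > 0`), `F ≥ m > 0` on `[0,b]`, and `0 < F'(b) ≤ 2·H·b`, then
`F'(b)/F(b) ≤ √(H/m)`. -/
theorem slope_over_value_ratio_bound
    (H b m : ℝ) (hH : 0 < H) (hb : 0 < b) (hm : 0 < m) (F F' F'' : ℝ → ℝ)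
    (hF : ∀ x ∈ Set.Icc (0:ℝ) b, HasDerivWithinAt F (F' x) (Set.Icc 0 b) x)
    (hF' : ∀ x ∈ Set.Icc (0:ℝ) b, HasDerivWithinAt F' (F'' x) (Set.Icc 0 b) x)
    (hF''cont : ContinuousOn F'' (Set.Icc 0 b))
    (hbd : ∀ x ∈ Set.Icc (0:ℝ) b, F'' x ≤ H)
    (hlow : ∀ x ∈ Set.Icc (0:ℝ) b, m ≤ F x)
    (h1 : 0 < F' b) (h2 : F' b ≤ 2 * H * b) :
    F' b / F b ≤ Real.sqrt (H / m) := by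
  set A := F' b with hA
  set δ := A / (2 * H) with hδ
  set x₀ := b - δ with hx₀
  have h2H : (0:ℝ) < 2 * H := by linarith
  have hδpos : 0 < δ := div_pos h1 h2H
  have hδle : δ ≤ b := (div_le_iff₀ h2H).2 (by linarith [h2])
  have hx₀mem : x₀ ∈ Set.Icc (0:ℝ) b := ⟨by simp [hx₀]; linarith, by simp [hx₀]; linarith⟩
  have hbmem : b ∈ Set.Icc (0:ℝ) b := ⟨le_of_lt hb, le_refl b⟩
  have hint : interior (Set.Icc (0:ℝ) b) = Set.Ioo 0 b := interior_Icc
  -- g x = F' x - H * x is antitone on [0,b]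
  have hganti : AntitoneOn (fun x => F' x - H * x) (Set.Icc 0 b) := by
    apply antitoneOn_of_hasDerivWithinAt_nonpos (convex_Icc 0 b)
      (f' := fun x => F'' x - H)
    · exact ContinuousOn.sub (fun x hx => (hF' x hx).continuousWithinAt)
        (continuousOn_const.mul continuousOn_id)
    · intro x hx
      rw [hint] at hx ⊢
      exact (((hF' x (Set.Ioo_subset_Icc_self hx)).mono Set.Ioo_subset_Icc_self).sub
        ((hasDerivWithinAt_id x _).const_mul H)).congr_deriv (by ring)
    · intro x hx
      rw [hint] at hx
      linarith [hbd x (Set.Ioo_subset_Icc_self hx)]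
  -- hence F' x ≥ A - H * (b - x) for x in [0,b]
  have hF'lb : ∀ x ∈ Set.Icc (0:ℝ) b, A - H * (b - x) ≤ F' x := by
    intro x hx
    have := hganti hx hbmem hx.2
    simp only at this
    linarith
  -- φ x = F x - (A * x + (H/2) * (b - x)^2) is monotone on [0,b]
  have hφmono : MonotoneOn (fun x => F x - (A * x + H / 2 * (b - x) ^ 2)) (Set.Icc 0 b) := by
    apply monotoneOn_of_hasDerivWithinAt_nonneg (convex_Icc 0 b)
      (f' := fun x => F' x - (A - H * (b - x)))
    · exact ContinuousOn.sub (fun x hx => (hF x hx).continuousWithinAt)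
        (by fun_prop)
    · intro x hx
      rw [hint] at hx ⊢
      have hd : HasDerivWithinAt (fun x => A * x + H / 2 * (b - x) ^ 2)
          (A - H * (b - x)) (Set.Ioo 0 b) x := by
        have : HasDerivAt (fun x => A * x + H / 2 * (b - x) ^ 2)
            (A * 1 + H / 2 * (2 * (b - x) ^ 1 * (0 - 1))) x := by
          exact ((hasDerivAt_id x).const_mul A).add
            (((hasDerivAt_const x b).sub (hasDerivAt_id x)).pow 2 |>.const_mul (H / 2))
        have := this.hasDerivWithinAt (s := Set.Ioo 0 b)
        exact this.congr_deriv (by ring)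
      exact ((hF x (Set.Ioo_subset_Icc_self hx)).mono Set.Ioo_subset_Icc_self).sub hd
    · intro x hx
      rw [hint] at hx
      linarith [hF'lb x (Set.Ioo_subset_Icc_self hx)]
  -- dip inequality
  have hkey := hφmono hx₀mem hbmem (by linarith)
  simp only at hkey
  have hdip : m + A ^ 2 / (4 * H) ≤ F b := by
    have hFx₀ := hlow x₀ hx₀mem
    have hbx : b - x₀ = δ := by simp [hx₀]
    have hδval : δ = A / (2 * H) := hδ
    have : A * δ - H / 2 * δ ^ 2 ≤ F b - F x₀ := by
      have : F x₀ - (A * x₀ + H / 2 * (b - x₀) ^ 2) ≤ F b - (A * b + H / 2 * (b - b) ^ 2) :=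
        hkey
      rw [hbx] at this
      nlinarith [this]
    have hAδ : A * δ = A ^ 2 / (2 * H) := by
      rw [hδval]; field_simp
    have hδsq : H / 2 * δ ^ 2 = A ^ 2 / (8 * H) := by
      rw [hδval]; field_simp; ring
    rw [hAδ, hδsq] at this
    have h8 : A ^ 2 / (2 * H) - A ^ 2 / (8 * H) - A ^ 2 / (4 * H) = A ^ 2 / (8 * H) := by
      field_simp; ring
    have h9 : 0 ≤ A ^ 2 / (8 * H) := div_nonneg (sq_nonneg A) (by linarith)
    linarith
  -- conclude
  have hFb : 0 < F b := lt_of_lt_of_le hm (hlow b hbmem)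
  rw [div_le_iff₀ hFb]
  have hs : Real.sqrt (H / m) ^ 2 = H / m := Real.sq_sqrt (le_of_lt (div_pos hH hm))
  have hspos : 0 < Real.sqrt (H / m) := Real.sqrt_pos.2 (div_pos hH hm)
  set s := Real.sqrt (H / m)
  have hs2 : s ^ 2 * m = H := by rw [hs]; field_simp
  set t := A ^ 2 / (4 * H) with htdef
  have ht : 4 * H * t = A ^ 2 := by rw [htdef]; field_simp
  nlinarith [sq_nonneg (A - 2 * s * m), ht, hs2, mul_pos hspos hm,
    mul_le_mul_of_nonneg_left hdip (le_of_lt hspos)]
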